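/- The assignment L_m x_k = (−k + σm)x_{k+m}, L_m y_k = (−k + m(σ + 1/2))y_{k+m}, I_r x_k = −2t^{2r}(σ+1)x_{k+r}, I_r y_k = −t^{2r}(2σ+1)y_{k+r}, G_p x_k = t^{2p}y_{k+p}, G_p y_k = (−t)^{2p}(−k + (2σ+1)p)x_{k+p}, for k ∈ (1/2)ℤ, defines a module structure over the twisted N=2 superconformal algebra on the ℤ/2-graded space A_t(σ) with even basis {x_k} and odd basis {y_k}. -/
import Mathlib

lemma sum_single_apply (f : ℤ → ℂ) (a j : ℤ) (w : ℤ →₀ ℂ) :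
    (w.sum fun k c => Finsupp.single (k + a) (f k * c)) j = f (j - a) * w (j - a) := by
  classical
  rw [Finsupp.sum_apply, Finsupp.sum, Finset.sum_eq_single (j - a)]
  · rw [Finsupp.single_apply, if_pos (by omega)]
  · intro b _ hne
    rw [Finsupp.single_apply, if_neg (by omega)]
  · intro h
    rw [Finsupp.notMem_support_iff.mp h, mul_zero, Finsupp.single_zero, Finsupp.coe_zero,
      Pi.zero_apply]

lemma prodext {u v : (ℤ →₀ ℂ) × (ℤ →₀ ℂ)} (h1 : ∀ j, u.1 j = v.1 j)
    (h2 : ∀ j, u.2 j = v.2 j) : u = v :=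
  Prod.ext (Finsupp.ext h1) (Finsupp.ext h2)

lemma tpow_even (t : ℂ) (ht : t = 1 ∨ t = -1) {a : ℤ} (ha : Even a) : t ^ a = 1 := by
  rcases ht with rfl | rfl
  · exact one_zpow a
  · exact ha.neg_one_zpow

lemma tpow_odd (t : ℂ) (ht : t = 1 ∨ t = -1) {a : ℤ} (ha : Odd a) : t ^ a = t := by
  rcases ht with rfl | rfl
  · exact one_zpow a
  · exact ha.neg_one_zpow


/- The intermediate series module `A_t(σ)` has basis `{x_k, y_k : k ∈ (1/2)ℤ}`
(`x_k` even, `y_k` odd); indices are encoded by their doubles, so the even part is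
`ℤ →₀ ℂ` (coefficient at doubled index `k` for `x_{k/2}`) and similarly the odd
part.  Operator indices are likewise doubled (`a = 2r` odd for `I_r`, `a = 2p` for
`G_p`).  The claim is that the given action satisfies all the bracket relations of
the twisted N=2 superconformal algebra, i.e. defines a 𝒯-module structure. -/

noncomputable def ALop (σ : ℂ) (m : ℤ) (w : (ℤ →₀ ℂ) × (ℤ →₀ ℂ)) :
    (ℤ →₀ ℂ) × (ℤ →₀ ℂ) :=
  (w.1.sum fun k c => Finsupp.single (k + 2 * m) ((-(k : ℂ) / 2 + σ * m) * c),
   w.2.sum fun k c => Finsupp.single (k + 2 * m) ((-(k : ℂ) / 2 + (σ + 1/2) * m) * c))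

noncomputable def AIop (t σ : ℂ) (a : ℤ) (w : (ℤ →₀ ℂ) × (ℤ →₀ ℂ)) :
    (ℤ →₀ ℂ) × (ℤ →₀ ℂ) :=
  (w.1.sum fun k c => Finsupp.single (k + a) ((-2 * t ^ a * (σ + 1)) * c),
   w.2.sum fun k c => Finsupp.single (k + a) ((-(t ^ a) * (2 * σ + 1)) * c))

noncomputable def AGop (t σ : ℂ) (a : ℤ) (w : (ℤ →₀ ℂ) × (ℤ →₀ ℂ)) :
    (ℤ →₀ ℂ) × (ℤ →₀ ℂ) :=
  (w.2.sum fun k c =>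
      Finsupp.single (k + a) (((-t) ^ a * (-(k : ℂ) / 2 + (2 * σ + 1) * ((a : ℂ) / 2))) * c),
   w.1.sum fun k c => Finsupp.single (k + a) (t ^ a * c))

theorem stmt18 (t σ : ℂ) (ht : t = 1 ∨ t = -1) :
    (∀ (m n : ℤ) (w : (ℤ →₀ ℂ) × (ℤ →₀ ℂ)),
        ALop σ m (ALop σ n w) - ALop σ n (ALop σ m w)
          = ((m - n : ℤ) : ℂ) • ALop σ (m + n) w) ∧
    (∀ (m a : ℤ), Odd a → ∀ w : (ℤ →₀ ℂ) × (ℤ →₀ ℂ),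
        ALop σ m (AIop t σ a w) - AIop t σ a (ALop σ m w)
          = (-(a : ℂ) / 2) • AIop t σ (a + 2 * m) w) ∧
    (∀ a c : ℤ, Odd a → Odd c → ∀ w : (ℤ →₀ ℂ) × (ℤ →₀ ℂ),
        AIop t σ a (AIop t σ c w) - AIop t σ c (AIop t σ a w) = 0) ∧
    (∀ (m a : ℤ) (w : (ℤ →₀ ℂ) × (ℤ →₀ ℂ)),
        ALop σ m (AGop t σ a w) - AGop t σ a (ALop σ m w)
          = ((m : ℂ) / 2 - (a : ℂ) / 2) • AGop t σ (a + 2 * m) w) ∧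
    (∀ a c : ℤ, Odd a → ∀ w : (ℤ →₀ ℂ) × (ℤ →₀ ℂ),
        AIop t σ a (AGop t σ c w) - AGop t σ c (AIop t σ a w) = AGop t σ (a + c) w) ∧
    (∀ a c : ℤ, Even (a + c) → ∀ w : (ℤ →₀ ℂ) × (ℤ →₀ ℂ),
        AGop t σ a (AGop t σ c w) + AGop t σ c (AGop t σ a w)
          = ((-1 : ℂ) ^ a * 2) • ALop σ ((a + c) / 2) w) ∧
    (∀ a c : ℤ, Odd (a + c) → ∀ w : (ℤ →₀ ℂ) × (ℤ →₀ ℂ),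
        AGop t σ a (AGop t σ c w) + AGop t σ c (AGop t σ a w)
          = ((-1 : ℂ) ^ (a + 1) * (((a : ℂ) - (c : ℂ)) / 2)) • AIop t σ (a + c) w) := by
  have ht0 : t ≠ 0 := by rcases ht with rfl | rfl <;> norm_num
  have htn : -t = 1 ∨ -t = -1 := by rcases ht with rfl | rfl <;> norm_num
  have ht0n : -t ≠ 0 := by rcases ht with rfl | rfl <;> norm_num
  refine ⟨?_, ?_, ?_, ?_, ?_, ?_, ?_⟩
  · -- LL
    intro m n w
    apply prodext <;> intro j <;>
      simp only [ALop, Prod.fst_sub, Prod.snd_sub, Prod.smul_fst, Prod.smul_snd,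
        Finsupp.sub_apply, Finsupp.smul_apply, smul_eq_mul, sum_single_apply] <;>
      push_cast <;> ring_nf
  · -- LI
    intro m a ha w
    have h1 : t ^ a = t := tpow_odd t ht ha
    have h2 : t ^ (a + 2 * m) = t := tpow_odd t ht (ha.add_even ⟨m, two_mul m⟩)
    apply prodext <;> intro j <;>
      simp only [ALop, AIop, Prod.fst_sub, Prod.snd_sub, Prod.smul_fst, Prod.smul_snd,
        Finsupp.sub_apply, Finsupp.smul_apply, smul_eq_mul, sum_single_apply, h1, h2] <;>
      push_cast <;> ring_nf
  · -- II
    intro a c _ _ w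
    apply prodext <;> intro j <;>
      simp only [AIop, Prod.fst_sub, Prod.snd_sub, Prod.fst_zero, Prod.snd_zero,
        Finsupp.sub_apply, Finsupp.coe_zero, Pi.zero_apply, sum_single_apply] <;>
      ring_nf
  · -- LG
    intro m a w
    have h1 : t ^ (a + 2 * m) = t ^ a := by
      rw [zpow_add₀ ht0, tpow_even t ht ⟨m, two_mul m⟩, mul_one]
    have h2 : (-t) ^ (a + 2 * m) = (-t) ^ a := by
      rw [zpow_add₀ ht0n, tpow_even (-t) htn ⟨m, two_mul m⟩, mul_one]
    apply prodext <;> intro j <;>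
      simp only [ALop, AGop, Prod.fst_sub, Prod.snd_sub, Prod.smul_fst, Prod.smul_snd,
        Finsupp.sub_apply, Finsupp.smul_apply, smul_eq_mul, sum_single_apply, h1, h2] <;>
      push_cast <;> ring_nf
  · -- IG
    intro a c ha w
    have h1 : t ^ a = t := tpow_odd t ht ha
    have h2 : t ^ (a + c) = t * t ^ c := by rw [zpow_add₀ ht0, h1]
    have h3 : (-t) ^ (a + c) = -t * (-t) ^ c := by
      rw [zpow_add₀ ht0n, tpow_odd (-t) htn ha]
    apply prodext <;> intro j <;>
      simp only [AIop, AGop, Prod.fst_sub, Prod.snd_sub,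
        Finsupp.sub_apply, sum_single_apply, h1, h2, h3] <;>
      push_cast <;> ring_nf
  · -- GG even
    intro a c h w
    obtain ⟨d, hd⟩ := h
    have hc : c = d + d - a := by omega
    subst hc
    rw [show (a + (d + d - a)) / 2 = d from by omega]
    have hx : (-1 : ℂ) ^ (d + d - a) = (-1) ^ a := by
      rw [show d + d - a = a + ((d - a) + (d - a)) from by ring,
        zpow_add₀ (by norm_num : (-1 : ℂ) ≠ 0), Even.neg_one_zpow ⟨d - a, rfl⟩, mul_one]
    rcases ht with rfl | rfl <;>
      apply prodext <;> intro j <;>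
      simp only [ALop, AGop, neg_neg, one_zpow, Prod.fst_add, Prod.snd_add, Prod.smul_fst,
        Prod.smul_snd, Finsupp.add_apply, Finsupp.smul_apply, smul_eq_mul,
        sum_single_apply, hx] <;>
      push_cast <;> ring_nf
  · -- GG odd
    intro a c h w
    obtain ⟨d, hd⟩ := h
    have hc : c = 2 * d + 1 - a := by omega
    subst hc
    rw [show a + (2 * d + 1 - a) = 2 * d + 1 from by omega]
    have hx : (-1 : ℂ) ^ (2 * d + 1 - a) = -(-1) ^ a := by
      rw [show 2 * d + 1 - a = a + (2 * (d - a) + 1) from by ring,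
        zpow_add₀ (by norm_num : (-1 : ℂ) ≠ 0), Odd.neg_one_zpow ⟨d - a, rfl⟩, mul_neg_one]
    have hy : (-1 : ℂ) ^ (2 * d + 1) = -1 := Odd.neg_one_zpow ⟨d, rfl⟩
    have hz : (-1 : ℂ) ^ (a + 1) = -(-1) ^ a := by
      rw [zpow_add₀ (by norm_num : (-1 : ℂ) ≠ 0), zpow_one, mul_neg_one]
    rcases ht with rfl | rfl <;>
      apply prodext <;> intro j <;>
      simp only [AIop, AGop, neg_neg, one_zpow, Prod.fst_add, Prod.snd_add, Prod.smul_fst,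
        Prod.smul_snd, Finsupp.add_apply, Finsupp.smul_apply, smul_eq_mul,
        sum_single_apply, hx, hy, hz] <;>
      push_cast <;> ring_nf
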